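/- Let F : ℝ^p → ℝⁿ be continuously differentiable with Jacobian J(w) ∈ ℝ^{n×p}, let y ∈ ℝⁿ, and let B ⊆ {1, …, n} be a batch of size b. Write J_B(w) ∈ ℝ^{b×p} for the rows of J(w) indexed by B, F_B(w), y_B for the corresponding subvectors, and assume G_B = J_B(w) J_B(w)^T is invertible. Set w' = w − J_B(w)^T G_B^{-1}(F_B(w) − y_B). Then F(w') − y = ( I_n − J̄ J_B(w)^T G̃ ) (F(w) − y), where J̄ = ∫₀¹ J(w + s(w'−w)) ds and G̃ ∈ ℝ^{b×n} is the zero-padded matrix whose columns indexed by B form G_B^{-1} and whose other columns are zero (so that G̃ (F(w) − y) = G_B^{-1}(F_B(w) − y_B)). -/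

import Mathlib

open Matrix

/-- One-step error identity for the mini-batch Gram-Gauss-Newton update:
if `w' = w − J_B(w)ᵀ G_B⁻¹ (F_B(w) − y_B)` with `G_B = J_B(w)J_B(w)ᵀ` invertible, then
`F(w') − y = (I − J̄ J_B(w)ᵀ G̃)(F(w) − y)`, where `J̄ = ∫₀¹ J(w + s(w'−w)) ds` and
`G̃ ∈ ℝ^{b×n}` has the columns indexed by the batch equal to `G_B⁻¹` and zero elsewhere. -/
theorem minibatch_ggn_one_step_error_identity {p n b : ℕ}
    (F : (Fin p → ℝ) → Fin n → ℝ) (hF : ContDiff ℝ 1 F)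
    (J : (Fin p → ℝ) → Matrix (Fin n) (Fin p) ℝ)
    (hJ : ∀ (w : Fin p → ℝ) (v : Fin p → ℝ), fderiv ℝ F w v = (J w).mulVec v)
    (y : Fin n → ℝ)
    (ι : Fin b ↪ Fin n)
    (w : Fin p → ℝ)
    (JB : Matrix (Fin b) (Fin p) ℝ) (hJB : JB = (J w).submatrix ι id)
    (GB : Matrix (Fin b) (Fin b) ℝ) (hGB : GB = JB * JBᵀ)
    (hGBunit : IsUnit GB)
    (w' : Fin p → ℝ)
    (hw' : w' = w - JBᵀ.mulVec (GB⁻¹.mulVec ((fun l => F w (ι l)) - fun l => y (ι l))))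
    (Jbar : Matrix (Fin n) (Fin p) ℝ)
    (hJbar : ∀ i j, Jbar i j = ∫ s in (0:ℝ)..1, J (w + s • (w' - w)) i j)
    (E : Matrix (Fin b) (Fin n) ℝ)
    (hE : E = Matrix.of fun l j => if ι l = j then 1 else 0)
    (Gtilde : Matrix (Fin b) (Fin n) ℝ) (hGtilde : Gtilde = GB⁻¹ * E) :
    F w' - y = (1 - Jbar * JBᵀ * Gtilde).mulVec (F w - y) := by
  have hFd : Differentiable ℝ F := hF.differentiable one_ne_zero
  set v : Fin p → ℝ := w' - w with hv
  have hpathc : Continuous fun s : ℝ => w + s • v := by continuity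
  have hfd : Continuous fun s : ℝ => fderiv ℝ F (w + s • v) :=
    (hF.continuous_fderiv one_ne_zero).comp hpathc
  -- J entries along path are continuous
  have hJe : ∀ (u : Fin p → ℝ) i j, J u i j = fderiv ℝ F u (Pi.single j 1) i := by
    intro u i j
    rw [hJ]
    simp [Matrix.mulVec, dotProduct, Pi.single_apply, mul_ite]
  have hJcont : ∀ i j, Continuous fun s : ℝ => J (w + s • v) i j := by
    intro i j
    simp only [hJe]
    exact (continuous_apply i).comp (hfd.clm_apply continuous_const)
  have hmvcont : Continuous fun s : ℝ => (J (w + s • v)).mulVec v := by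
    rw [continuous_pi_iff]
    intro i
    simp only [Matrix.mulVec, dotProduct]
    exact continuous_finset_sum _ fun j _ => (hJcont i j).mul continuous_const
  -- derivative of s ↦ F (w + s • v)
  have hcomp : ∀ s : ℝ, HasDerivAt (fun t : ℝ => F (w + t • v)) ((J (w + s • v)).mulVec v) s := by
    intro s
    have hpath : HasDerivAt (fun t : ℝ => w + t • v) v s := by
      simpa using ((hasDerivAt_id s).smul_const v).const_add w
    have h1 := ((hFd (w + s • v)).hasFDerivAt).comp_hasDerivAt s hpath
    simpa [hJ, Function.comp_def] using h1
  -- FTC componentwise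
  have key : ∀ i, F w' i - F w i = ∫ s in (0:ℝ)..1, (J (w + s • v)).mulVec v i := by
    intro i
    have hgi : ∀ s ∈ Set.uIcc (0:ℝ) 1,
        HasDerivAt (fun t : ℝ => F (w + t • v) i) ((J (w + s • v)).mulVec v i) s := by
      intro s _
      have := ((ContinuousLinearMap.proj i : (Fin n → ℝ) →L[ℝ] ℝ).hasFDerivAt).comp_hasDerivAt s
        (hcomp s)
      simpa [Function.comp_def] using this
    have hint : IntervalIntegrable (fun s : ℝ => (J (w + s • v)).mulVec v i)
        MeasureTheory.volume 0 1 :=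
      (((continuous_apply i).comp hmvcont)).intervalIntegrable 0 1
    have := intervalIntegral.integral_eq_sub_of_hasDerivAt hgi hint
    rw [this]
    have h1 : w + (1:ℝ) • v = w' := by simp [hv]
    have h0 : w + (0:ℝ) • v = w := by simp
    rw [h1, h0]
  -- swap integral and sum
  have hswap : ∀ i, Jbar.mulVec v i = ∫ s in (0:ℝ)..1, (J (w + s • v)).mulVec v i := by
    intro i
    simp only [Matrix.mulVec, dotProduct, hJbar]
    have hstep : ∀ j : Fin p, (∫ s in (0:ℝ)..1, J (w + s • v) i j) * v j
        = ∫ s in (0:ℝ)..1, J (w + s • v) i j * v j := fun j =>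
      (intervalIntegral.integral_mul_const _ _).symm
    simp only [hstep]
    exact (intervalIntegral.integral_finset_sum fun j _ =>
      ((hJcont i j).mul continuous_const).intervalIntegrable 0 1).symm
  have hFTC : F w' - F w = Jbar.mulVec v := by
    funext i
    simpa [key i] using (hswap i).symm
  -- batch residual
  set d : Fin b → ℝ := (fun l => F w (ι l)) - fun l => y (ι l) with hd
  have hEr : E.mulVec (F w - y) = d := by
    funext l
    simp [hE, Matrix.mulVec, dotProduct, hd, Finset.sum_ite_eq, Pi.sub_apply]
  have hGt : Gtilde.mulVec (F w - y) = GB⁻¹.mulVec d := by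
    rw [hGtilde, ← Matrix.mulVec_mulVec, hEr]
  -- assemble
  have hvval : v = -(JBᵀ.mulVec (GB⁻¹.mulVec d)) := by
    rw [hv, hw']
    abel
  have : F w' - y = (F w - y) - (Jbar * JBᵀ * Gtilde).mulVec (F w - y) := by
    have h2 : (Jbar * JBᵀ * Gtilde).mulVec (F w - y)
        = Jbar.mulVec (JBᵀ.mulVec (GB⁻¹.mulVec d)) := by
      rw [← Matrix.mulVec_mulVec, hGt, ← Matrix.mulVec_mulVec]
    rw [h2]
    have h3 : F w' - y = (F w - y) + (F w' - F w) := by abel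
    rw [h3, hFTC, hvval]
    simp [Matrix.mulVec_neg]
    abel
  rw [this, Matrix.sub_mulVec, Matrix.one_mulVec]
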